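/- Let A be a unital C*-algebra, let s ≥ 1 and n ≥ 1 be integers, and let u = (u_ij) be an n×n matrix over A satisfying the level-s cubic relations: u is unitary, the transpose u^t is unitary, each u_ij is normal, each p_ij = u_ij u_ij* is a projection, and u_ij^s = p_ij. Then u_ij u_ik = 0 whenever j ≠ k. -/

import Mathlib

/-- for a matrix `u` over a unital C*-algebra satisfying the level-`s`
cubic relations, entries on the same row are orthogonal: `u i j * u i k = 0` for `j ≠ k`. -/
theorem cubic_row_entries_orthogonal {A : Type*} [CStarAlgebra A]
    (s n : ℕ) (hs : 1 ≤ s) (hn : 1 ≤ n) (u : Fin n → Fin n → A)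
    (hU1 : ∀ i j, ∑ k, u i k * star (u j k) = if i = j then 1 else 0)
    (hU2 : ∀ i j, ∑ k, star (u k i) * u k j = if i = j then 1 else 0)
    (hT1 : ∀ i j, ∑ k, u k i * star (u k j) = if i = j then 1 else 0)
    (hT2 : ∀ i j, ∑ k, star (u i k) * u j k = if i = j then 1 else 0)
    (hnormal : ∀ i j, u i j * star (u i j) = star (u i j) * u i j)
    (hproj : ∀ i j, star (u i j * star (u i j)) = u i j * star (u i j) ∧
      (u i j * star (u i j)) * (u i j * star (u i j)) = u i j * star (u i j))
    (hpow : ∀ i j, u i j ^ s = u i j * star (u i j)) :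
    ∀ i j k, j ≠ k → u i j * u i k = 0 := by
  intro i j k hjk
  letI := CStarAlgebra.spectralOrder A
  haveI := CStarAlgebra.spectralOrderedRing A
  set P : Fin n → A := fun l => u i l * star (u i l) with hP
  have hPsa : ∀ l, star (P l) = P l := fun l => (hproj i l).1
  have hPidem : ∀ l, P l * P l = P l := fun l => (hproj i l).2
  have hsm : ∀ l, star (u i l) * u i l = P l := fun l => (hnormal i l).symm
  -- u i l * P l = u i l
  have hup : ∀ l, u i l * P l = u i l := by
    intro l
    have key : star (u i l * P l - u i l) * (u i l * P l - u i l) = 0 := by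
      have expand : star (u i l * P l - u i l) * (u i l * P l - u i l)
          = P l * (star (u i l) * u i l) * P l - P l * (star (u i l) * u i l)
            - (star (u i l) * u i l) * P l + star (u i l) * u i l := by
        simp only [star_sub, star_mul, hPsa l]
        noncomm_ring
      rw [expand, hsm l]
      simp only [hPidem l]
      abel
    exact sub_eq_zero.mp ((CStarRing.star_mul_self_eq_zero_iff _).mp key)
  -- P l * u i l = u i l
  have hpu : ∀ l, P l * u i l = u i l := by
    intro l
    have key : (P l * u i l - u i l) * star (P l * u i l - u i l) = 0 := by
      have expand : (P l * u i l - u i l) * star (P l * u i l - u i l)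
          = P l * (u i l * star (u i l)) * P l - P l * (u i l * star (u i l))
            - (u i l * star (u i l)) * P l + u i l * star (u i l) := by
        simp only [star_sub, star_mul, hPsa l]
        noncomm_ring
      have hd : u i l * star (u i l) = P l := rfl
      rw [expand, hd]
      simp only [hPidem l]
      abel
    exact sub_eq_zero.mp ((CStarRing.mul_star_self_eq_zero_iff _).mp key)
  -- sum of the projections in row i is 1
  have hsum : ∑ l, P l = 1 := by simpa [hP] using hU1 i i
  -- sandwiched orthogonality: P a * P b * P a = 0 for a ≠ b
  have horth : ∀ a b : Fin n, a ≠ b → P a * P b * P a = 0 := by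
    intro a b hab
    have hsum' : ∑ l, P a * P l * P a = P a := by
      calc ∑ l, P a * P l * P a = P a * (∑ l, P l) * P a := by
            rw [Finset.mul_sum, Finset.sum_mul]
        _ = P a := by rw [hsum, mul_one, hPidem a]
    have hnn : ∀ l, (0 : A) ≤ P a * P l * P a := by
      intro l
      have e : star (P l * P a) * (P l * P a) = P a * P l * P a := by
        rw [star_mul, hPsa l, hPsa a, mul_assoc, ← mul_assoc (P l), hPidem l,
          ← mul_assoc]
      rw [← e]
      exact star_mul_self_nonneg _
    have hsplit : ∑ l ∈ Finset.univ.erase a, P a * P l * P a = 0 := by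
      have h1 : ∑ l ∈ Finset.univ.erase a, P a * P l * P a + P a * P a * P a
          = P a := by
        rw [Finset.sum_erase_add _ _ (Finset.mem_univ a)]
        exact hsum'
      have haa : P a * P a * P a = P a := by rw [hPidem a, hPidem a]
      rw [haa] at h1
      exact add_eq_right.mp h1
    exact (Finset.sum_eq_zero_iff_of_nonneg (fun l _ => hnn l)).mp hsplit b
      (Finset.mem_erase.mpr ⟨hab.symm, Finset.mem_univ b⟩)
  -- full orthogonality: P j * P k = 0
  have hPP : P j * P k = 0 := by
    have h1 : star (P j * P k) * (P j * P k) = 0 := by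
      have e : star (P j * P k) * (P j * P k) = P k * P j * P k := by
        rw [star_mul, hPsa j, hPsa k, mul_assoc, ← mul_assoc (P j), hPidem j,
          ← mul_assoc]
      rw [e, horth k j (Ne.symm hjk)]
    exact (CStarRing.star_mul_self_eq_zero_iff _).mp h1
  calc u i j * u i k = (u i j * P j) * (P k * u i k) := by rw [hup j, hpu k]
    _ = u i j * (P j * P k) * u i k := by noncomm_ring
    _ = 0 := by rw [hPP]; simp
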